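/- For all r ∈ [1, ∞) and τ ∈ (0, ∞), μ_PE(r) > μ_CS(τ) fails in general; however, for each fixed t ∈ [1, ∞), μ_PE(t) > μ_CS(t), i.e., at equal expansion parameter values t ≥ 1, the arc probability of the proportional-edge PCD strictly exceeds that of the central similarity PCD. -/

import Mathlib

noncomputable def muPE (r : ℝ) : ℝ :=
  if r < 3/2 then 37 * r^2 / 216
  else if r < 2 then -r^2/8 + 4 - 8/r + 9/(2*r^2)
  else 1 - 3/(2*r^2)

noncomputable def muCS (τ : ℝ) : ℝ :=
  if τ ≤ 1 then τ^2/6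
  else τ * (4*τ - 1) / (2 * (1 + 2*τ) * (2 + τ))

theorem muPE_gt_muCS : ∀ t : ℝ, 1 ≤ t → muPE t > muCS t := by
  intro t ht
  unfold muPE muCS
  have ht0 : (0:ℝ) < t := by linarith
  split_ifs with h1 h2 h3 h4
  · -- t < 3/2, t ≤ 1 : t = 1
    have : t = 1 := le_antisymm h2 ht
    subst this; norm_num
  · -- 1 < t < 3/2
    rw [gt_iff_lt, div_lt_div_iff₀ (by positivity) (by norm_num)]
    nlinarith [sq_nonneg t, sq_nonneg (t-1), mul_pos ht0 ht0]
  · -- 3/2 ≤ t < 2, t ≤ 1 impossible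
    linarith
  · -- 3/2 ≤ t < 2
    rw [gt_iff_lt, div_lt_iff₀ (by positivity)]
    have h32 : (3:ℝ)/2 ≤ t := not_lt.mp h1
    have e : -t^2/8 + 4 - 8/t + 9/(2*t^2)
        = (-t^4/8 + 4*t^2 - 8*t + 9/2) / t^2 := by
      field_simp
    rw [e, div_mul_eq_mul_div, lt_div_iff₀ (by positivity)]
    nlinarith [sq_nonneg (t-3/2), sq_nonneg (t-2), mul_pos ht0 ht0,
      mul_nonneg (sub_nonneg.mpr h32) (sq_nonneg (t-2)),
      mul_nonneg (mul_nonneg (sub_nonneg.mpr h32) (sub_nonneg.mpr h32)) (sq_nonneg (t-2))]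
  · linarith
  · -- t ≥ 2
    have h2t : (2:ℝ) ≤ t := not_lt.mp h3
    rw [gt_iff_lt, div_lt_iff₀ (by positivity)]
    have e : 1 - 3/(2*t^2) = (2*t^2 - 3) / (2*t^2) := by
      field_simp
    rw [e, div_mul_eq_mul_div, lt_div_iff₀ (by positivity)]
    nlinarith [mul_pos ht0 ht0, sq_nonneg t]
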